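/- Let Q1, Q2 be quadratic forms on R^3 satisfying the nondegeneracy condition (for every nonzero (u,v,w), det[∇Q1; ∇Q2; (u,v,w)] is not the zero polynomial). For any one-dimensional subspace V ⊂ R^5, the set {ξ ∈ R^3 : the orthogonal projection of V onto the tangent space V_ξ of the surface S = {(r,s,t,Q1,Q2)} at ξ is zero} is contained in the zero set of a nonzero polynomial of degree at most 2. -/

import Mathlib

open Matrix

/-- The three tangent vectors `n₁(ξ), n₂(ξ), n₃(ξ)` of the surface
`(r,s,t,Q₁(r,s,t),Q₂(r,s,t))` at the point `ξ`, where `Q_i(v) = v ⬝ A_i v`. -/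
noncomputable def tangentVec (A₁ A₂ : Matrix (Fin 3) (Fin 3) ℝ) (ξ : Fin 3 → ℝ) :
    Fin 3 → EuclideanSpace ℝ (Fin 5) :=
  ![(WithLp.toLp 2 ![1, 0, 0, ((2 : ℝ) • A₁.mulVec ξ) 0, ((2 : ℝ) • A₂.mulVec ξ) 0] :
      EuclideanSpace ℝ (Fin 5)),
    WithLp.toLp 2 ![0, 1, 0, ((2 : ℝ) • A₁.mulVec ξ) 1, ((2 : ℝ) • A₂.mulVec ξ) 1],
    WithLp.toLp 2 ![0, 0, 1, ((2 : ℝ) • A₁.mulVec ξ) 2, ((2 : ℝ) • A₂.mulVec ξ) 2]]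

/-- The tangent space to the surface `(r,s,t,Q₁,Q₂)` at `ξ`, as a subspace of `ℝ⁵`. -/
noncomputable def tangentSpace (A₁ A₂ : Matrix (Fin 3) (Fin 3) ℝ) (ξ : Fin 3 → ℝ) :
    Submodule ℝ (EuclideanSpace ℝ (Fin 5)) :=
  Submodule.span ℝ (Set.range (tangentVec A₁ A₂ ξ))

/-- The nondegeneracy condition of Theorem 1.1: for every nonzero `(u,v,w)`, the determinant
of the matrix with rows `∇Q₁(ξ), ∇Q₂(ξ), (u,v,w)` is not the zero polynomial in `ξ`. -/
def NondegCond (A₁ A₂ : Matrix (Fin 3) (Fin 3) ℝ) : Prop :=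
  ∀ x : Fin 3 → ℝ, x ≠ 0 →
    ∃ ξ : Fin 3 → ℝ,
      (Matrix.of ![(2 : ℝ) • A₁.mulVec ξ, (2 : ℝ) • A₂.mulVec ξ, x]).det ≠ 0

section aux

open MvPolynomial

/-- The affine polynomial whose value at `ξ` is `⟪n_i(ξ), v⟫`. -/
noncomputable def projPoly (A₁ A₂ : Matrix (Fin 3) (Fin 3) ℝ) (v : Fin 5 → ℝ) (i : Fin 3) :
    MvPolynomial (Fin 3) ℝ :=
  C (![v 0, v 1, v 2] i) +
    C (2 * v 3) * ∑ j, C (A₁ i j) * X j + C (2 * v 4) * ∑ j, C (A₂ i j) * X j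

lemma projPoly_eval (A₁ A₂ : Matrix (Fin 3) (Fin 3) ℝ) (v : Fin 5 → ℝ) (i : Fin 3)
    (ξ : Fin 3 → ℝ) :
    MvPolynomial.eval ξ (projPoly A₁ A₂ v i) =
      ![v 0, v 1, v 2] i + 2 * v 3 * (A₁.mulVec ξ i) + 2 * v 4 * (A₂.mulVec ξ i) := by
  simp [projPoly, Matrix.mulVec, dotProduct, Finset.mul_sum]

lemma projPoly_totalDegree (A₁ A₂ : Matrix (Fin 3) (Fin 3) ℝ) (v : Fin 5 → ℝ) (i : Fin 3) :
    (projPoly A₁ A₂ v i).totalDegree ≤ 1 := by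
  refine (totalDegree_add _ _).trans (max_le ((totalDegree_add _ _).trans (max_le ?_ ?_)) ?_)
  · simp [totalDegree_C]
  all_goals
    refine (totalDegree_mul _ _).trans ?_
    simp only [totalDegree_C, zero_add]
    refine (totalDegree_finset_sum _ _).trans ?_
    refine Finset.sup_le fun j _ => (totalDegree_mul _ _).trans ?_
    simp [totalDegree_X]

lemma projPoly_key (A₁ A₂ : Matrix (Fin 3) (Fin 3) ℝ) (hnd : NondegCond A₁ A₂)
    (v : Fin 5 → ℝ) (hv : v ≠ 0)
    (h : ∀ ξ : Fin 3 → ℝ, ∀ i : Fin 3, MvPolynomial.eval ξ (projPoly A₁ A₂ v i) = 0) :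
    False := by
  simp only [projPoly_eval] at h
  have h0 : ∀ i : Fin 3, ![v 0, v 1, v 2] i = 0 := by
    intro i
    have := h 0 i
    simpa [Matrix.mulVec_zero] using this
  have hrel : ∀ ξ : Fin 3 → ℝ, ∀ i : Fin 3,
      v 3 * (A₁.mulVec ξ i) + v 4 * (A₂.mulVec ξ i) = 0 := by
    intro ξ i
    have := h ξ i
    rw [h0 i] at this
    linarith
  by_cases h34 : v 3 = 0 ∧ v 4 = 0
  · apply hv
    funext k
    fin_cases k
    · exact h0 0
    · exact h0 1
    · exact h0 2
    · exact h34.1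
    · exact h34.2
  · obtain ⟨ξ, hdet⟩ := hnd ![1, 0, 0] (by
      intro hx
      have := congrFun hx 0
      simp at this)
    apply hdet
    have e1 := hrel ξ 1
    have e2 := hrel ξ 2
    have hdet_eq : (Matrix.of ![(2 : ℝ) • A₁.mulVec ξ, (2 : ℝ) • A₂.mulVec ξ,
        ![1, 0, 0]]).det =
        4 * (A₁.mulVec ξ 1 * A₂.mulVec ξ 2 - A₁.mulVec ξ 2 * A₂.mulVec ξ 1) := by
      rw [Matrix.det_fin_three]
      simp [Pi.smul_apply]
      ring
    rw [hdet_eq]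
    rcases not_and_or.mp h34 with h3 | h4
    · have h' : v 3 * (4 * (A₁.mulVec ξ 1 * A₂.mulVec ξ 2 -
          A₁.mulVec ξ 2 * A₂.mulVec ξ 1)) = 0 := by
        linear_combination (4 * A₂.mulVec ξ 2) * e1 - (4 * A₂.mulVec ξ 1) * e2
      exact (mul_eq_zero.mp h').resolve_left h3
    · have h' : v 4 * (4 * (A₁.mulVec ξ 1 * A₂.mulVec ξ 2 -
          A₁.mulVec ξ 2 * A₂.mulVec ξ 1)) = 0 := by
        linear_combination (4 * A₁.mulVec ξ 1) * e2 - (4 * A₁.mulVec ξ 2) * e1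
      exact (mul_eq_zero.mp h').resolve_left h4

end aux

/-- For a one-dimensional subspace `V ⊂ ℝ⁵`, the set of points `ξ` where the orthogonal
projection of `V` onto the tangent space of the surface at `ξ` is zero is contained in the
zero set of a nonzero polynomial of degree at most 2. -/
theorem stmt12 (A₁ A₂ : Matrix (Fin 3) (Fin 3) ℝ) (hA₁ : A₁.IsSymm) (hA₂ : A₂.IsSymm)
    (hnd : NondegCond A₁ A₂)
    (V : Submodule ℝ (EuclideanSpace ℝ (Fin 5))) (hV : Module.finrank ℝ V = 1) :
    ∃ p : MvPolynomial (Fin 3) ℝ, p ≠ 0 ∧ p.totalDegree ≤ 2 ∧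
      ∀ ξ : Fin 3 → ℝ,
        V.map (Submodule.orthogonalProjectionOnto (tangentSpace A₁ A₂ ξ)).toLinearMap = ⊥ →
          MvPolynomial.eval ξ p = 0 := by
  have hnt : Nontrivial V := Module.nontrivial_of_finrank_eq_succ hV
  obtain ⟨w, hw0⟩ := exists_ne (0 : V)
  set v : EuclideanSpace ℝ (Fin 5) := (w : EuclideanSpace ℝ (Fin 5)) with hv_def
  have hv : v ≠ 0 := fun h => hw0 (Subtype.ext h)
  have hvV : v ∈ V := w.2
  refine ⟨∑ i, (projPoly A₁ A₂ v i) ^ 2, ?_, ?_, ?_⟩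
  · intro hp
    apply projPoly_key A₁ A₂ hnd v (by simpa using hv)
    intro ξ i
    have h0 : MvPolynomial.eval ξ (∑ i, (projPoly A₁ A₂ v i) ^ 2) = 0 := by rw [hp]; simp
    rw [map_sum] at h0
    simp only [map_pow] at h0
    have := (Finset.sum_eq_zero_iff_of_nonneg (fun j _ => sq_nonneg _)).mp h0 i
      (Finset.mem_univ i)
    exact pow_eq_zero_iff (by norm_num) |>.mp this
  · refine (MvPolynomial.totalDegree_finset_sum _ _).trans (Finset.sup_le fun i _ => ?_)
    calc ((projPoly A₁ A₂ v i) ^ 2).totalDegree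
        ≤ 2 * (projPoly A₁ A₂ v i).totalDegree := MvPolynomial.totalDegree_pow _ _
      _ ≤ 2 * 1 := by
          exact Nat.mul_le_mul_left 2 (projPoly_totalDegree A₁ A₂ v i)
      _ = 2 := rfl
  · intro ξ hmap
    have hproj : (Submodule.orthogonalProjectionOnto (tangentSpace A₁ A₂ ξ)) v = 0 := by
      have hm : (Submodule.orthogonalProjectionOnto (tangentSpace A₁ A₂ ξ)).toLinearMap v ∈
          V.map (Submodule.orthogonalProjectionOnto (tangentSpace A₁ A₂ ξ)).toLinearMap :=
        Submodule.mem_map_of_mem hvV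
      rw [hmap] at hm
      exact Submodule.mem_bot _ |>.mp hm
    have hvo : v ∈ (tangentSpace A₁ A₂ ξ)ᗮ := Submodule.orthogonalProjectionOnto_eq_zero_iff.mp hproj
    have hinner : ∀ i : Fin 3, (inner ℝ (tangentVec A₁ A₂ ξ i) v : ℝ) = 0 := fun i =>
      (Submodule.mem_orthogonal _ _).mp hvo _ (Submodule.subset_span (Set.mem_range_self i))
    rw [map_sum]
    refine Finset.sum_eq_zero fun i _ => ?_
    rw [map_pow]
    rw [projPoly_eval]
    have hi := hinner i
    rw [pow_eq_zero_iff (two_ne_zero)]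
    fin_cases i
    all_goals simp [tangentVec, PiLp.inner_apply, Fin.sum_univ_five] at hi ⊢
    all_goals linarith
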